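/- If 𝒜 is an almost disjoint family such that Ψ(𝒜) is almost-normal, then 𝒜 is strongly ℵ₀-separated. -/

import Mathlib

open Set

namespace PsiSpace

/-- An (infinite) almost disjoint family of infinite subsets of ℕ. -/
def AlmostDisjoint (𝒜 : Set (Set ℕ)) : Prop :=
  𝒜.Infinite ∧ (∀ a ∈ 𝒜, a.Infinite) ∧
    ∀ a ∈ 𝒜, ∀ b ∈ 𝒜, a ≠ b → (a ∩ b).Finite

/-- A maximal almost disjoint family. -/
def MadFamily (𝒜 : Set (Set ℕ)) : Prop :=
  AlmostDisjoint 𝒜 ∧ ∀ X : Set ℕ, X.Infinite → ∃ a ∈ 𝒜, (a ∩ X).Infinite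

/-- 𝒜↾B = {a ∈ 𝒜 : a ∩ B infinite}. -/
def ADRestrict (𝒜 : Set (Set ℕ)) (B : Set ℕ) : Set (Set ℕ) :=
  {a | a ∈ 𝒜 ∧ (a ∩ B).Infinite}

/-- 𝒜 has true cardinality 𝔠. -/
def TrueCardContinuum (𝒜 : Set (Set ℕ)) : Prop :=
  ∀ B : Set ℕ, (ADRestrict 𝒜 B).Finite ∨ Cardinal.mk ↥(ADRestrict 𝒜 B) = Cardinal.continuum

/-- The underlying set of the Mrówka–Isbell space Ψ(𝒜): ℕ together with the members of 𝒜. -/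
def Psi (𝒜 : Set (Set ℕ)) : Type := ℕ ⊕ {a : Set ℕ // a ∈ 𝒜}

/-- The isolated point of Ψ(𝒜) corresponding to n ∈ ℕ. -/
def Psi.nat {𝒜 : Set (Set ℕ)} (n : ℕ) : Psi 𝒜 := Sum.inl n

/-- The point of Ψ(𝒜) corresponding to a ∈ 𝒜. -/
def Psi.pt {𝒜 : Set (Set ℕ)} (a : {a : Set ℕ // a ∈ 𝒜}) : Psi 𝒜 := Sum.inr a

/-- The Mrówka–Isbell topology: each n ∈ ℕ is isolated, and basic neighbourhoods of a ∈ 𝒜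
are {a} ∪ (a \ F) for F finite. Equivalently, U is open iff for every a ∈ 𝒜 with a ∈ U,
all but finitely many elements of a belong to U. -/
instance psiTop (𝒜 : Set (Set ℕ)) : TopologicalSpace (Psi 𝒜) where
  IsOpen U := ∀ a : {a : Set ℕ // a ∈ 𝒜}, Psi.pt a ∈ U →
    {n : ℕ | n ∈ a.1 ∧ Psi.nat n ∉ U}.Finite
  isOpen_univ := fun a _ => by
    convert Set.finite_empty using 1
    ext n
    simp [Set.mem_univ]
  isOpen_inter := fun U V hU hV a ha => by
    refine ((hU a ha.1).union (hV a ha.2)).subset ?_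
    rintro n ⟨hn, hnUV⟩
    by_cases h : Psi.nat n ∈ U
    · exact Or.inr ⟨hn, fun h' => hnUV ⟨h, h'⟩⟩
    · exact Or.inl ⟨hn, h⟩
  isOpen_sUnion := fun S hS a ha => by
    obtain ⟨U, hUS, haU⟩ := ha
    exact (hS U hUS a haU).subset fun n hn => ⟨hn.1, fun h => hn.2 ⟨U, hUS, h⟩⟩

/-- The copy of a set W ⊆ ℕ inside Ψ(𝒜). -/
def PsiNat (𝒜 : Set (Set ℕ)) (W : Set ℕ) : Set (Psi 𝒜) := {x | ∃ n ∈ W, x = Psi.nat n}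

/-- The copy of a subfamily 𝒞 ⊆ 𝒜 inside Ψ(𝒜). -/
def PsiSub (𝒜 𝒞 : Set (Set ℕ)) : Set (Psi 𝒜) :=
  {x | ∃ a : {a : Set ℕ // a ∈ 𝒜}, a.1 ∈ 𝒞 ∧ x = Psi.pt a}

/-- A and B are separated by disjoint open sets. -/
def SepOpen {X : Type*} [TopologicalSpace X] (A B : Set X) : Prop :=
  ∃ U V : Set X, IsOpen U ∧ IsOpen V ∧ A ⊆ U ∧ B ⊆ V ∧ Disjoint U V

/-- Regular closed (closed domain): A is the closure of its interior. -/
def RegClosed {X : Type*} [TopologicalSpace X] (A : Set X) : Prop :=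
  closure (interior A) = A

/-- π-closed: a finite intersection of regular closed sets. -/
def PiClosed {X : Type*} [TopologicalSpace X] (A : Set X) : Prop :=
  ∃ S : Finset (Set X), (∀ B ∈ S, RegClosed B) ∧ A = ⋂₀ ↑S

/-- A is an intersection of at most n regular closed sets. -/
def InterOfAtMost {X : Type*} [TopologicalSpace X] (n : ℕ) (A : Set X) : Prop :=
  ∃ S : Finset (Set X), S.card ≤ n ∧ (∀ B ∈ S, RegClosed B) ∧ A = ⋂₀ ↑S

/-- Almost-normal: disjoint closed + regular closed sets are separated. -/
def AlmostNormal (X : Type*) [TopologicalSpace X] : Prop :=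
  ∀ A B : Set X, IsClosed A → RegClosed B → Disjoint A B → SepOpen A B

/-- π-normal: disjoint closed + π-closed sets are separated. -/
def PiNormal (X : Type*) [TopologicalSpace X] : Prop :=
  ∀ A B : Set X, IsClosed A → PiClosed B → Disjoint A B → SepOpen A B

/-- Quasi-normal: disjoint π-closed sets are separated. -/
def QuasiNormal (X : Type*) [TopologicalSpace X] : Prop :=
  ∀ A B : Set X, PiClosed A → PiClosed B → Disjoint A B → SepOpen A B

/-- Mildly-normal: disjoint regular closed sets are separated. -/
def MildlyNormal (X : Type*) [TopologicalSpace X] : Prop :=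
  ∀ A B : Set X, RegClosed A → RegClosed B → Disjoint A B → SepOpen A B

/-- Partly-normal: disjoint regular closed + π-closed sets are separated. -/
def PartlyNormal (X : Type*) [TopologicalSpace X] : Prop :=
  ∀ A B : Set X, RegClosed A → PiClosed B → Disjoint A B → SepOpen A B

/-- n-partly-normal: disjoint regular closed + (intersection of at most n regular closed)
sets are separated. -/
def NPartlyNormal (n : ℕ) (X : Type*) [TopologicalSpace X] : Prop :=
  ∀ A B : Set X, RegClosed A → InterOfAtMost n B → Disjoint A B → SepOpen A B

/-- 𝓘⁺(𝒜): the sets B ⊆ ℕ with 𝒜↾B infinite. -/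
def IPlus (𝒜 : Set (Set ℕ)) : Set (Set ℕ) := {B | (ADRestrict 𝒜 B).Infinite}

/-- Completely separable almost disjoint family. -/
def CompletelySeparable (𝒜 : Set (Set ℕ)) : Prop :=
  ∀ B ∈ IPlus 𝒜, ∃ a ∈ 𝒜, a ⊆ B

/-- A Luzin family: it can be enumerated as ⟨a_α : α < ω₁⟩ so that for each α < ω₁ and
n ∈ ℕ, the set {β < α : a_α ∩ a_β ⊆ n} is finite. -/
def LuzinFamily (𝒜 : Set (Set ℕ)) : Prop :=
  ∃ a : Ordinal.{0} → Set ℕ,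
    (∀ α, α < (Cardinal.aleph 1).ord → a α ∈ 𝒜) ∧
    (∀ x ∈ 𝒜, ∃ α, α < (Cardinal.aleph 1).ord ∧ a α = x) ∧
    (∀ α, α < (Cardinal.aleph 1).ord → ∀ β, β < (Cardinal.aleph 1).ord → α ≠ β → a α ≠ a β) ∧
    ∀ α, α < (Cardinal.aleph 1).ord → ∀ n : ℕ,
      {β : Ordinal.{0} | β < α ∧ a α ∩ a β ⊆ Set.Iio n}.Finite

/-- Strongly ℵ₀-separated almost disjoint family. -/
def StronglyAleph0Separated (𝒜 : Set (Set ℕ)) : Prop :=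
  ∀ A B : Set (Set ℕ), A ⊆ 𝒜 → B ⊆ 𝒜 → A.Countable → A.Infinite →
    B.Countable → B.Infinite → Disjoint A B →
    ∃ X : Set ℕ,
      (∀ a ∈ 𝒜, (a \ X).Finite ∨ (a ∩ X).Finite) ∧
      (∀ a ∈ A, (a \ X).Finite) ∧
      (∀ a ∈ B, (a ∩ X).Finite)

lemma nat_ne_pt {𝒜 : Set (Set ℕ)} (n : ℕ) (a : {a : Set ℕ // a ∈ 𝒜}) :
    (Psi.nat n : Psi 𝒜) ≠ Psi.pt a := fun h => Sum.inl_ne_inr h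

lemma pt_inj {𝒜 : Set (Set ℕ)} {a b : {a : Set ℕ // a ∈ 𝒜}}
    (h : (Psi.pt a : Psi 𝒜) = Psi.pt b) : a = b := Sum.inr_injective h

lemma nat_inj {𝒜 : Set (Set ℕ)} {n m : ℕ}
    (h : (Psi.nat n : Psi 𝒜) = Psi.nat m) : n = m := Sum.inl_injective h

lemma isOpen_iff {𝒜 : Set (Set ℕ)} (U : Set (Psi 𝒜)) :
    IsOpen U ↔ ∀ a : {a : Set ℕ // a ∈ 𝒜}, Psi.pt a ∈ U →
      {n : ℕ | n ∈ a.1 ∧ Psi.nat n ∉ U}.Finite := Iff.rfl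

lemma isOpen_psiNat (𝒜 : Set (Set ℕ)) (W : Set ℕ) : IsOpen (PsiNat 𝒜 W) := by
  rw [isOpen_iff]
  intro a ha
  obtain ⟨n, _, hn⟩ := ha
  exact absurd hn.symm (nat_ne_pt n a)

lemma isClosed_psiSub (𝒜 𝒞 : Set (Set ℕ)) : IsClosed (PsiSub 𝒜 𝒞) := by
  rw [← isOpen_compl_iff, isOpen_iff]
  intro a _
  refine Set.finite_empty.subset ?_
  rintro n ⟨-, hn⟩
  simp only [Set.mem_compl_iff, not_not] at hn
  obtain ⟨b, -, hb⟩ := hn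
  exact absurd hb (nat_ne_pt n b)

lemma regClosed_closure {X : Type*} [TopologicalSpace X] {U : Set X} (hU : IsOpen U) :
    RegClosed (closure U) := by
  refine subset_antisymm ?_ ?_
  · exact (closure_mono interior_subset).trans closure_closure.subset
  · exact closure_mono (interior_maximal subset_closure hU)

lemma mem_closure_psiNat {𝒜 : Set (Set ℕ)} (W : Set ℕ) (c : {a : Set ℕ // a ∈ 𝒜}) :
    (Psi.pt c : Psi 𝒜) ∈ closure (PsiNat 𝒜 W) ↔ (c.1 ∩ W).Infinite := by
  constructor
  · intro hc
    by_contra hfin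
    rw [Set.not_infinite] at hfin
    set O : Set (Psi 𝒜) := insert (Psi.pt c) (PsiNat 𝒜 (c.1 \ W)) with hO_def
    have hO : IsOpen O := by
      rw [isOpen_iff]
      intro a ha
      rcases Set.mem_insert_iff.1 ha with ha | ha
      · have hac : a = c := pt_inj ha
        subst hac
        refine hfin.subset ?_
        rintro n ⟨hna, hnO⟩
        refine ⟨hna, ?_⟩
        by_contra hnW
        exact hnO (Set.mem_insert_iff.2 (Or.inr ⟨n, ⟨hna, hnW⟩, rfl⟩))
      · obtain ⟨n, _, hn⟩ := ha
        exact absurd hn.symm (nat_ne_pt n a)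
    have hmem : (Psi.pt c : Psi 𝒜) ∈ O := Set.mem_insert _ _
    obtain ⟨x, hxO, hxW⟩ := (mem_closure_iff.1 hc) O hO hmem
    obtain ⟨n, hnW, rfl⟩ := hxW
    rcases Set.mem_insert_iff.1 hxO with hx | hx
    · exact nat_ne_pt n c hx
    · obtain ⟨m, hm, hmn⟩ := hx
      have : m = n := nat_inj hmn.symm
      subst this
      exact hm.2 hnW
  · intro hinf
    rw [mem_closure_iff]
    intro O hO hcO
    have hfin := (isOpen_iff O).1 hO c hcO
    obtain ⟨n, hn⟩ := (hinf.diff hfin).nonempty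
    have hnO : (Psi.nat n : Psi 𝒜) ∈ O := by
      by_contra hnotin
      exact hn.2 ⟨hn.1.1, hnotin⟩
    exact ⟨Psi.nat n, hnO, ⟨n, hn.1.2, rfl⟩⟩

/-- if Ψ(𝒜) is almost-normal then 𝒜 is strongly ℵ₀-separated. -/
theorem almostNormal_stronglySeparated (𝒜 : Set (Set ℕ)) (had : AlmostDisjoint 𝒜)
    (h : AlmostNormal (Psi 𝒜)) : StronglyAleph0Separated 𝒜 := by
  intro A B hA hB hAc hAinf hBc hBinf hdisj
  obtain ⟨f, hf⟩ := hAc.exists_eq_range hAinf.nonempty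
  obtain ⟨g, hg⟩ := hBc.exists_eq_range hBinf.nonempty
  have hfA : ∀ n, f n ∈ A := fun n => hf ▸ Set.mem_range_self n
  have hgB : ∀ n, g n ∈ B := fun n => hg ▸ Set.mem_range_self n
  have hne : ∀ n i, f n ≠ g i := fun n i hEq =>
    Set.disjoint_left.1 hdisj (hfA n) (hEq ▸ hgB i)
  have hfg_fin : ∀ n i, (f n ∩ g i).Finite := fun n i =>
    had.2.2 (f n) (hA (hfA n)) (g i) (hB (hgB i)) (hne n i)
  set W : Set ℕ := ⋃ n, (f n \ ⋃ i ∈ Finset.range (n+1), g i) with hWdef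
  -- every member of A is almost contained in W
  have hAW : ∀ n, (f n \ W).Finite := by
    intro n
    have h1 : f n \ W ⊆ ⋃ i ∈ Finset.range (n+1), (f n ∩ g i) := by
      rintro x ⟨hx1, hx2⟩
      by_contra hx
      apply hx2
      refine Set.mem_iUnion.2 ⟨n, hx1, fun hxG => hx ?_⟩
      obtain ⟨i, hi, hxi⟩ := Set.mem_iUnion₂.1 hxG
      exact Set.mem_iUnion₂.2 ⟨i, hi, hx1, hxi⟩
    exact (Set.Finite.biUnion (Finset.range (n+1)).finite_toSet
      (fun i _ => hfg_fin n i)).subset h1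
  -- every member of B is almost disjoint from W
  have hBW : ∀ k, (g k ∩ W).Finite := by
    intro k
    have h1 : g k ∩ W ⊆ ⋃ n ∈ Finset.range k, (g k ∩ f n) := by
      rintro x ⟨hxg, hxW⟩
      obtain ⟨n, hxn⟩ := Set.mem_iUnion.1 hxW
      obtain ⟨hxf, hxG⟩ := hxn
      have hnk : n < k := by
        by_contra hnk
        push_neg at hnk
        exact hxG (Set.mem_iUnion₂.2
          ⟨k, Finset.mem_range.2 (Nat.lt_succ_of_le hnk), hxg⟩)
      exact Set.mem_iUnion₂.2 ⟨n, Finset.mem_range.2 hnk, hxg, hxf⟩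
    refine (Set.Finite.biUnion (Finset.range k).finite_toSet
      (fun n _ => ?_)).subset h1
    rw [Set.inter_comm]
    exact hfg_fin n k
  -- the closed set and the regular closed set
  set F : Set (Psi 𝒜) := PsiSub 𝒜 {c | c ∈ 𝒜 ∧ (c ∩ W).Finite} with hFdef
  set R : Set (Psi 𝒜) := closure (PsiNat 𝒜 W) with hRdef
  have hFc : IsClosed F := isClosed_psiSub _ _
  have hRr : RegClosed R := regClosed_closure (isOpen_psiNat 𝒜 W)
  have hFR : Disjoint F R := by
    rw [Set.disjoint_left]
    rintro x ⟨c, hc, rfl⟩ hxR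
    exact ((mem_closure_psiNat W c).1 hxR) hc.2
  obtain ⟨U, V, hU, hV, hFU, hRV, hUV⟩ := h F R hFc hRr hFR
  have hVside : ∀ c : {a : Set ℕ // a ∈ 𝒜}, (c.1 ∩ W).Infinite →
      (c.1 \ {n | Psi.nat n ∈ V}).Finite := by
    intro c hc
    have hcV : (Psi.pt c : Psi 𝒜) ∈ V := hRV ((mem_closure_psiNat W c).2 hc)
    exact ((isOpen_iff V).1 hV c hcV).subset (fun n hn => ⟨hn.1, hn.2⟩)
  have hUside : ∀ c : {a : Set ℕ // a ∈ 𝒜}, (c.1 ∩ W).Finite →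
      (c.1 ∩ {n | Psi.nat n ∈ V}).Finite := by
    intro c hc
    have hmem : (Psi.pt c : Psi 𝒜) ∈ U := hFU ⟨c, ⟨c.2, hc⟩, rfl⟩
    refine ((isOpen_iff U).1 hU c hmem).subset ?_
    rintro n ⟨hn1, hn2⟩
    exact ⟨hn1, fun hnU => Set.disjoint_left.1 hUV hnU hn2⟩
  refine ⟨{n | Psi.nat n ∈ V}, ?_, ?_, ?_⟩
  · intro a ha
    by_cases hcase : (a ∩ W).Finite
    · exact Or.inr (hUside ⟨a, ha⟩ hcase)
    · exact Or.inl (hVside ⟨a, ha⟩ hcase)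
  · intro a haA
    have : a ∈ Set.range f := hf ▸ haA
    obtain ⟨n, rfl⟩ := this
    have hinf : (f n ∩ W).Infinite := by
      have h2 : (f n \ (f n \ W)).Infinite :=
        (had.2.1 (f n) (hA (hfA n))).diff (hAW n)
      refine h2.mono ?_
      rintro x ⟨hx1, hx2⟩
      refine ⟨hx1, ?_⟩
      by_contra hxW
      exact hx2 ⟨hx1, hxW⟩
    exact hVside ⟨f n, hA (hfA n)⟩ hinf
  · intro b hbB
    have : b ∈ Set.range g := hg ▸ hbB
    obtain ⟨k, rfl⟩ := this
    exact hUside ⟨g k, hB (hgB k)⟩ (hBW k)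

end PsiSpace
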